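/- Let S ⊆ ℝⁿ be a nonempty closed convex set, and let f : ℝⁿ → ℝ be differentiable, ℓ-strongly convex and u-smooth with 0 < ℓ ≤ u. Let γ ∈ (0,1), set η = (1-γ)/(ℓ(γ - γ^t) + u(1-γ)) for some fixed t ≥ 1 (so that 1/η ≥ u), and define θ' = Π_S(θ - η ∇f(θ)) for θ ∈ S. If θ* ∈ S minimizes f over S, then ‖θ' - θ*‖² ≤ (1 - ℓ(1-γ)/(ℓγ + u(1-γ)))·‖θ - θ*‖². -/

import Mathlib

open RealInnerProductSpace

section Aux

variable {E : Type*} [NormedAddCommGroup E] [InnerProductSpace ℝ E] [CompleteSpace E]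

lemma aux_nonneg {a C : ℝ} (hC : 0 ≤ C)
    (h : ∀ s : ℝ, 0 < s → s ≤ 1 → -(s * C) ≤ a) : 0 ≤ a := by
  by_contra hca
  push_neg at hca
  have hs0 : 0 < min 1 (-a / (2 * C + 2)) :=
    lt_min one_pos (div_pos (by linarith) (by linarith))
  have h1 := h _ hs0 (min_le_left _ _)
  have h2 : min 1 (-a / (2 * C + 2)) * C ≤ (-a / (2 * C + 2)) * C :=
    mul_le_mul_of_nonneg_right (min_le_right _ _) hC
  have h3 : (-a / (2 * C + 2)) * C < -a := by
    rw [div_mul_eq_mul_div, div_lt_iff₀ (by linarith)]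
    nlinarith
  linarith

lemma line_hasDerivAt (f : E → ℝ) (f' : E → E)
    (hdiff : ∀ x, HasGradientAt f (f' x) x) (x v : E) (s : ℝ) :
    HasDerivAt (fun r : ℝ => f (x + r • v)) (⟪f' (x + s • v), v⟫) s := by
  have h1 : HasDerivAt (fun r : ℝ => x + r • v) v s := by
    simpa using ((hasDerivAt_id s).smul_const v).const_add x
  have h2 := (hdiff (x + s • v)).hasFDerivAt.comp_hasDerivAt s h1
  simpa [InnerProductSpace.toDual_apply_apply, Function.comp_def] using h2

lemma descent_lemma {f : E → ℝ} {f' : E → E} {u : ℝ} (hu : 0 ≤ u)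
    (hdiff : ∀ x, HasGradientAt f (f' x) x)
    (hsmooth : ∀ x y, ‖f' x - f' y‖ ≤ u * ‖x - y‖) (x y : E) :
    f y ≤ f x + ⟪f' x, y - x⟫ + u / 2 * ‖y - x‖ ^ 2 := by
  set v := y - x with hv
  set C : ℝ := ⟪f' x, v⟫ with hC
  set N : ℝ := ‖v‖ ^ 2 with hN
  set ψ : ℝ → ℝ := fun s => f (x + s • v) - s * C - u * s ^ 2 / 2 * N with hψ
  have key : ∀ s : ℝ, HasDerivAt ψ (⟪f' (x + s • v), v⟫ - C - u * s * N) s := by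
    intro s
    have h2 := line_hasDerivAt f f' hdiff x v s
    have h3 : HasDerivAt (fun r : ℝ => r * C) C s := by
      simpa using (hasDerivAt_id s).mul_const C
    have h4 : HasDerivAt (fun r : ℝ => u * r ^ 2 / 2 * N) (u * s * N) s := by
      have h5 := (((hasDerivAt_pow 2 s).const_mul u).div_const 2).mul_const N
      exact h5.congr_deriv (by ring)
    exact (h2.sub h3).sub h4
  have hdiffψ : Differentiable ℝ ψ := fun s => (key s).differentiableAt
  have anti : AntitoneOn ψ (Set.Icc 0 1) := by
    apply antitoneOn_of_deriv_nonpos (convex_Icc 0 1) hdiffψ.continuous.continuousOn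
      hdiffψ.differentiableOn
    intro s hs
    rw [interior_Icc] at hs
    rw [(key s).deriv]
    have hb : (⟪f' (x + s • v) - f' x, v⟫ : ℝ) ≤ u * s * N := by
      calc (⟪f' (x + s • v) - f' x, v⟫ : ℝ) ≤ ‖f' (x + s • v) - f' x‖ * ‖v‖ :=
            real_inner_le_norm _ _
        _ ≤ (u * ‖(x + s • v) - x‖) * ‖v‖ :=
            mul_le_mul_of_nonneg_right (hsmooth _ _) (norm_nonneg _)
        _ = u * s * N := by
            rw [add_sub_cancel_left, norm_smul, Real.norm_eq_abs, abs_of_pos hs.1, hN]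
            ring
    rw [inner_sub_left] at hb
    linarith
  have h01 := anti (Set.left_mem_Icc.2 zero_le_one) (Set.right_mem_Icc.2 zero_le_one) zero_le_one
  have e1 : x + (1 : ℝ) • v = y := by rw [one_smul, hv, add_sub_cancel]
  have e0 : x + (0 : ℝ) • v = x := by rw [zero_smul, add_zero]
  simp only [hψ, e1, e0] at h01
  nlinarith [h01]

lemma cocoercive {f : E → ℝ} {f' : E → E} {u : ℝ} (hu : 0 < u)
    (hconv : ∀ x y, f x + ⟪f' x, y - x⟫ ≤ f y)
    (hdesc : ∀ x y, f y ≤ f x + ⟪f' x, y - x⟫ + u / 2 * ‖y - x‖ ^ 2) (x y : E) :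
    ‖f' x - f' y‖ ^ 2 ≤ u * ⟪f' x - f' y, x - y⟫ := by
  have key : ∀ a b : E, f a + ⟪f' a, b - a⟫ + 1 / (2 * u) * ‖f' a - f' b‖ ^ 2 ≤ f b := by
    intro a b
    set z := b + (1 / u) • (f' a - f' b) with hz
    have h1 := hconv a z
    have h2 := hdesc b z
    have e1 : z - b = (1 / u) • (f' a - f' b) := by rw [hz]; abel
    have e2 : z - a = (b - a) + (1 / u) • (f' a - f' b) := by rw [hz]; abel
    rw [e1] at h2
    rw [e2, inner_add_right] at h1
    rw [real_inner_smul_right] at h1 h2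
    rw [norm_smul] at h2
    have e3 : (⟪f' a, f' a - f' b⟫ : ℝ) - ⟪f' b, f' a - f' b⟫ = ‖f' a - f' b‖ ^ 2 := by
      rw [← inner_sub_left, real_inner_self_eq_norm_sq]
    have e4 : (‖(1:ℝ) / u‖ * ‖f' a - f' b‖) ^ 2 = (1/u)^2 * ‖f' a - f' b‖^2 := by
      rw [mul_pow, Real.norm_eq_abs, sq_abs]
    rw [e4] at h2
    have hu' : u ≠ 0 := ne_of_gt hu
    have e3' : 1 / u * (⟪f' a, f' a - f' b⟫ : ℝ) - 1 / u * ⟪f' b, f' a - f' b⟫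
        = 1 / u * ‖f' a - f' b‖ ^ 2 := by rw [← mul_sub, e3]
    have e7 : u / 2 * ((1/u)^2 * ‖f' a - f' b‖^2) = 1 / (2*u) * ‖f' a - f' b‖^2 := by
      field_simp
    have e9 : 1 / u * ‖f' a - f' b‖^2 = 2 * (1 / (2*u) * ‖f' a - f' b‖^2) := by
      field_simp
    linarith [h1, h2]
  have k1 := key x y
  have k2 := key y x
  have e5 : (⟪f' x, y - x⟫ : ℝ) = -⟪f' x, x - y⟫ := by
    rw [← inner_neg_right]; congr 1; abel
  have e6 : ‖f' y - f' x‖ = ‖f' x - f' y‖ := norm_sub_rev _ _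
  rw [e5] at k1
  rw [e6] at k2
  rw [inner_sub_left]
  have hu' : u ≠ 0 := ne_of_gt hu
  have e9 : 1 / u * ‖f' x - f' y‖^2 = 2 * (1 / (2*u) * ‖f' x - f' y‖^2) := by
    field_simp
  have : 1 / u * ‖f' x - f' y‖ ^ 2 ≤ ⟪f' x, x - y⟫ - ⟪f' y, x - y⟫ := by linarith [k1, k2]
  calc ‖f' x - f' y‖ ^ 2 = u * (1 / u * ‖f' x - f' y‖ ^ 2) := by field_simp
    _ ≤ u * (⟪f' x, x - y⟫ - ⟪f' y, x - y⟫) := by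
        exact mul_le_mul_of_nonneg_left this hu.le

end Aux

set_option maxHeartbeats 2000000 in
theorem smooth_strongly_convex_gd_contraction {n : ℕ}
    (S : Set (EuclideanSpace ℝ (Fin n))) (hSne : S.Nonempty)
    (hScl : IsClosed S) (hSc : Convex ℝ S)
    (f : EuclideanSpace ℝ (Fin n) → ℝ)
    (f' : EuclideanSpace ℝ (Fin n) → EuclideanSpace ℝ (Fin n))
    (ℓ u : ℝ) (hℓ : 0 < ℓ) (hℓu : ℓ ≤ u)
    (hdiff : ∀ x, HasGradientAt f (f' x) x)
    (hsc : ∀ x y, f y ≥ f x + (inner ℝ (f' x) (y - x) : ℝ) + ℓ / 2 * ‖y - x‖ ^ 2)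
    (hsmooth : ∀ x y, ‖f' x - f' y‖ ≤ u * ‖x - y‖)
    (γ : ℝ) (hγ0 : 0 < γ) (hγ1 : γ < 1) (t : ℕ) (ht : 1 ≤ t)
    (η : ℝ) (hη : η = (1 - γ) / (ℓ * (γ - γ ^ t) + u * (1 - γ)))
    (θ θ' θs : EuclideanSpace ℝ (Fin n)) (hθ : θ ∈ S) (hθ' : θ' ∈ S)
    (hproj : ∀ z ∈ S, ‖θ' - (θ - η • f' θ)‖ ≤ ‖z - (θ - η • f' θ)‖)
    (hθs : θs ∈ S) (hmin : ∀ z ∈ S, f θs ≤ f z) :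
    ‖θ' - θs‖ ^ 2 ≤ (1 - ℓ * (1 - γ) / (ℓ * γ + u * (1 - γ))) * ‖θ - θs‖ ^ 2 := by
  have hu : 0 < u := lt_of_lt_of_le hℓ hℓu
  -- basic facts about η
  have hγt : γ ^ t ≤ γ := by
    calc γ ^ t ≤ γ ^ 1 := pow_le_pow_of_le_one hγ0.le hγ1.le ht
      _ = γ := pow_one γ
  have hγt0 : 0 ≤ γ ^ t := pow_nonneg hγ0.le t
  have hD1pos : 0 < ℓ * (γ - γ ^ t) + u * (1 - γ) := by nlinarith
  have hD2pos : 0 < ℓ * γ + u * (1 - γ) := by nlinarith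
  have hηpos : 0 < η := hη ▸ div_pos (by linarith) hD1pos
  have hηu : η * u ≤ 1 := by
    rw [hη, div_mul_eq_mul_div, div_le_one hD1pos]
    nlinarith
  set c : ℝ := (1 - γ) / (ℓ * γ + u * (1 - γ)) with hc_def
  have hcpos : 0 < c := div_pos (by linarith) hD2pos
  have hc : c ≤ η := by
    rw [hc_def, hη]
    gcongr
    · linarith
  -- variational inequality at the minimizer θs
  have hVIs : ∀ z ∈ S, 0 ≤ (inner ℝ (f' θs) (z - θs) : ℝ) := by
    intro z hz
    apply aux_nonneg (C := u * ‖z - θs‖ ^ 2) (by positivity)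
    intro s hs0 hs1
    set yt := θs + s • (z - θs) with hyt
    have hymem : yt ∈ S := by
      have h := hSc hθs hz (by linarith : (0:ℝ) ≤ 1 - s) hs0.le (by ring)
      have e : (1 - s) • θs + s • z = yt := by rw [hyt]; module
      rwa [e] at h
    have h1 := hsc yt θs
    have h2 := hmin yt hymem
    have e1 : θs - yt = -(s • (z - θs)) := by rw [hyt]; abel
    have e2 : (inner ℝ (f' yt) (θs - yt) : ℝ) = -(s * inner ℝ (f' yt) (z - θs)) := by
      rw [e1, inner_neg_right, real_inner_smul_right]
    have e3 : ‖θs - yt‖ ^ 2 = s ^ 2 * ‖z - θs‖ ^ 2 := by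
      rw [e1, norm_neg, norm_smul, Real.norm_eq_abs, mul_pow, sq_abs]
    rw [e2, e3] at h1
    have h4 : 0 ≤ (inner ℝ (f' yt) (z - θs) : ℝ) := by
      have hs2 : 0 ≤ s * (inner ℝ (f' yt) (z - θs) : ℝ) := by nlinarith
      exact nonneg_of_mul_nonneg_right hs2 hs0
    have h6 : ‖f' yt - f' θs‖ ≤ u * (s * ‖z - θs‖) := by
      have h := hsmooth yt θs
      have e4 : ‖yt - θs‖ = s * ‖z - θs‖ := by
        rw [hyt, add_sub_cancel_left, norm_smul, Real.norm_eq_abs, abs_of_pos hs0]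
      rwa [e4] at h
    have h7 : (inner ℝ (f' yt - f' θs) (z - θs) : ℝ) ≤ u * (s * ‖z - θs‖) * ‖z - θs‖ :=
      le_trans (real_inner_le_norm _ _) (mul_le_mul_of_nonneg_right h6 (norm_nonneg _))
    have h8 : (inner ℝ (f' θs) (z - θs) : ℝ)
        = inner ℝ (f' yt) (z - θs) - (inner ℝ (f' yt - f' θs) (z - θs) : ℝ) := by
      rw [inner_sub_left]; ring
    rw [h8]
    nlinarith [norm_nonneg (z - θs)]
  -- variational inequality for the projection θ'
  set p : EuclideanSpace ℝ (Fin n) := θ - η • f' θ with hp_def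
  have hVIp' : ∀ z ∈ S, 0 ≤ (inner ℝ (θ' - p) (z - θ') : ℝ) := by
    intro z hz
    apply aux_nonneg (C := ‖z - θ'‖ ^ 2 / 2) (by positivity)
    intro s hs0 hs1
    have hw : θ' + s • (z - θ') ∈ S := by
      have h := hSc hθ' hz (by linarith : (0:ℝ) ≤ 1 - s) hs0.le (by ring)
      have e : (1 - s) • θ' + s • z = θ' + s • (z - θ') := by module
      rwa [e] at h
    have h1 := hproj _ hw
    have h2 : ‖θ' - p‖ ^ 2 ≤ ‖(θ' + s • (z - θ')) - p‖ ^ 2 :=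
      pow_le_pow_left₀ (norm_nonneg _) h1 2
    have e : (θ' + s • (z - θ')) - p = (θ' - p) + s • (z - θ') := by abel
    rw [e, norm_add_sq_real, real_inner_smul_right, norm_smul, Real.norm_eq_abs,
      mul_pow, sq_abs] at h2
    nlinarith
  have hVIp : ∀ z ∈ S, (inner ℝ (p - θ') (z - θ') : ℝ) ≤ 0 := by
    intro z hz
    have h := hVIp' z hz
    have e : p - θ' = -(θ' - p) := by abel
    rw [e, inner_neg_left]
    linarith
  set q : EuclideanSpace ℝ (Fin n) := θs - η • f' θs with hq_def
  -- monotonicity of the projection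
  have m1 : (inner ℝ (p - θ') (θs - θ') : ℝ) ≤ 0 := hVIp θs hθs
  have m2 : (inner ℝ (q - θs) (θ' - θs) : ℝ) ≤ 0 := by
    have e : q - θs = -(η • f' θs) := by rw [hq_def]; abel
    rw [e, inner_neg_left, real_inner_smul_left, neg_nonpos]
    exact mul_nonneg hηpos.le (hVIs θ' hθ')
  have key : ‖θ' - θs‖ ^ 2 ≤ (inner ℝ (p - q) (θ' - θs) : ℝ) := by
    have hid : p - q = (p - θ') - (q - θs) + (θ' - θs) := by abel
    rw [hid, inner_add_left, inner_sub_left, real_inner_self_eq_norm_sq]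
    have e : (inner ℝ (p - θ') (θ' - θs) : ℝ) = -(inner ℝ (p - θ') (θs - θ') : ℝ) := by
      rw [← inner_neg_right]; congr 1; abel
    rw [e]
    linarith
  have hle : ‖θ' - θs‖ ≤ ‖p - q‖ := by
    nlinarith [key, real_inner_le_norm (p - q) (θ' - θs), norm_nonneg (θ' - θs),
      norm_nonneg (p - q)]
  have hle2 : ‖θ' - θs‖ ^ 2 ≤ ‖p - q‖ ^ 2 := by
    exact pow_le_pow_left₀ (norm_nonneg _) hle 2
  -- contraction of the gradient step
  set d : EuclideanSpace ℝ (Fin n) := θ - θs with hd_def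
  set g : EuclideanSpace ℝ (Fin n) := f' θ - f' θs with hg_def
  set A : ℝ := inner ℝ g d with hA_def
  have hmono : ℓ * ‖d‖ ^ 2 ≤ A := by
    have h1 := hsc θ θs
    have h2 := hsc θs θ
    have e1 : (inner ℝ (f' θ) (θs - θ) : ℝ) = -(inner ℝ (f' θ) d : ℝ) := by
      rw [← inner_neg_right, hd_def]; congr 1; abel
    have e2 : ‖θs - θ‖ = ‖d‖ := by rw [hd_def, norm_sub_rev]
    have e3 : θ - θs = d := hd_def.symm
    rw [e1, e2] at h1
    rw [e3] at h2
    have e4 : A = inner ℝ (f' θ) d - (inner ℝ (f' θs) d : ℝ) := by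
      rw [hA_def, hg_def, inner_sub_left]
    rw [e4]
    linarith
  have hA0 : 0 ≤ A := le_trans (by positivity) hmono
  have hcoco : ‖g‖ ^ 2 ≤ u * A := by
    have hconv : ∀ x y : EuclideanSpace ℝ (Fin n),
        f x + (inner ℝ (f' x) (y - x) : ℝ) ≤ f y := by
      intro x y
      have := hsc x y
      nlinarith [sq_nonneg ‖y - x‖]
    have hdesc := descent_lemma hu.le hdiff hsmooth
    have h := cocoercive hu hconv hdesc θ θs
    rwa [← hg_def, ← hd_def, ← hA_def] at h
  have hexp : ‖p - q‖ ^ 2 = ‖d‖ ^ 2 - 2 * η * A + η ^ 2 * ‖g‖ ^ 2 := by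
    have e : p - q = d - η • g := by rw [hp_def, hq_def, hd_def, hg_def]; module
    rw [e, norm_sub_sq_real, real_inner_smul_right, norm_smul, Real.norm_eq_abs, mul_pow,
      sq_abs, real_inner_comm, ← hA_def]
    ring
  -- final algebra
  have hfinal : ‖d‖ ^ 2 - 2 * η * A + η ^ 2 * ‖g‖ ^ 2 ≤ (1 - ℓ * c) * ‖d‖ ^ 2 := by
    have h1 : η ^ 2 * ‖g‖ ^ 2 ≤ η ^ 2 * (u * A) :=
      mul_le_mul_of_nonneg_left hcoco (sq_nonneg η)
    have s1 : ℓ * c * ‖d‖ ^ 2 ≤ ℓ * η * ‖d‖ ^ 2 := by gcongr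
    have s2 : ℓ * η * ‖d‖ ^ 2 ≤ η * A := by nlinarith
    have s3 : η * A ≤ η * (2 - η * u) * A := by
      nlinarith [mul_nonneg (mul_nonneg hηpos.le (by linarith : (0:ℝ) ≤ 1 - η * u)) hA0]
    nlinarith
  have hgoal : ℓ * (1 - γ) / (ℓ * γ + u * (1 - γ)) = ℓ * c := by
    rw [hc_def, mul_div_assoc]
  rw [hgoal]
  calc ‖θ' - θs‖ ^ 2 ≤ ‖p - q‖ ^ 2 := hle2
    _ = ‖d‖ ^ 2 - 2 * η * A + η ^ 2 * ‖g‖ ^ 2 := hexp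
    _ ≤ (1 - ℓ * c) * ‖d‖ ^ 2 := hfinal
    _ = (1 - ℓ * c) * ‖θ - θs‖ ^ 2 := by rw [hd_def]
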